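/- arXiv:math/0609841 — 4 statements merged into one kernel-verified Lean document; each statement's English description precedes it below -/
import Mathlib

section
/- Let n ≥ 1, let λ > 0, and let c₁, …, cₙ be distinct nonzero real numbers. Then ∫_{{z ∈ ℂⁿ : ∑_{j=1}^{n} |z_j|² ≤ λ}} exp(−∑_{j=1}^{n} c_j |z_j|²) dz = πⁿ · ( ∏_{j=1}^{n} c_j^{-1} − ∑_{i=1}^{n} e^{−λ c_i} / ( c_i ∏_{j≠i} (c_j − c_i) ) ). -/
open MeasureTheory Real Finset

theorem disc_gauss (b R : ℝ) (hb : b ≠ 0) (hR : 0 ≤ R) :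
    (∫ z : ℂ, Set.indicator {z : ℂ | ‖z‖ ^ 2 ≤ R}
        (fun z => Real.exp (-(b * ‖z‖ ^ 2))) z)
      = π / b * (1 - Real.exp (-(b * R))) := by
  rw [← Complex.integral_comp_polarCoord_symm, polarCoord_target]
  have h1 : ∀ p : ℝ × ℝ, p.1 • Set.indicator {z : ℂ | ‖z‖ ^ 2 ≤ R}
        (fun z => Real.exp (-(b * ‖z‖ ^ 2))) (Complex.polarCoord.symm p)
      = p.1 * Set.indicator {r : ℝ | r ^ 2 ≤ R} (fun r => Real.exp (-(b * r ^ 2))) p.1 := by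
    intro p
    rw [smul_eq_mul]
    congr 1
    simp only [Set.indicator_apply, Set.mem_setOf_eq, Complex.norm_polarCoord_symm, sq_abs]
  simp_rw [h1]
  calc
    (∫ p in Set.Ioi (0:ℝ) ×ˢ Set.Ioo (-π) π,
        p.1 * Set.indicator {r : ℝ | r ^ 2 ≤ R} (fun r => Real.exp (-(b * r ^ 2))) p.1)
      = (∫ r in Set.Ioi (0:ℝ),
          r * Set.indicator {r : ℝ | r ^ 2 ≤ R} (fun r => Real.exp (-(b * r ^ 2))) r)
        * ∫ _ in Set.Ioo (-π) π, (1:ℝ) := by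
        rw [Measure.volume_eq_prod, ← setIntegral_prod_mul]
        simp
    _ = (2 * π) * ∫ r in Set.Ioi (0:ℝ),
          Set.indicator {r : ℝ | r ^ 2 ≤ R} (fun r => r * Real.exp (-(b * r ^ 2))) r := by
        simp only [integral_const, Measure.real, Measure.restrict_apply MeasurableSet.univ, Set.univ_inter,
          volume_Ioo, sub_neg_eq_add, ← two_mul, ENNReal.toReal_ofReal (by positivity : 0 ≤ 2 * π),
          smul_eq_mul, mul_one]
        rw [mul_comm]
        congr 1
        refine integral_congr_ae (Filter.Eventually.of_forall fun r => ?_)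
        simp only [Set.indicator_apply, Set.mem_setOf_eq, mul_ite, mul_zero]
    _ = (2 * π) * ∫ r in Set.Ioi (0:ℝ) ∩ {r : ℝ | r ^ 2 ≤ R},
          r * Real.exp (-(b * r ^ 2)) := by
        rw [setIntegral_indicator]
        exact measurableSet_le (by fun_prop) measurable_const
    _ = (2 * π) * ∫ r in Set.Ioc 0 (Real.sqrt R), r * Real.exp (-(b * r ^ 2)) := by
        congr 1
        apply setIntegral_congr_set
        apply Filter.EventuallyEq.of_eq
        ext r
        constructor
        · rintro ⟨ha, hc⟩; exact ⟨ha, (Real.le_sqrt' ha).mpr hc⟩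
        · rintro ⟨ha, hc⟩; exact ⟨ha, (Real.le_sqrt' ha).mp hc⟩
    _ = (2 * π) * ∫ r in (0:ℝ)..(Real.sqrt R), r * Real.exp (-(b * r ^ 2)) := by
        rw [intervalIntegral.integral_of_le (Real.sqrt_nonneg R)]
    _ = π / b * (1 - Real.exp (-(b * R))) := by
        have key : ∀ r : ℝ, HasDerivAt (fun r : ℝ => -(Real.exp (-(b * r ^ 2)) / (2 * b)))
            (r * Real.exp (-(b * r ^ 2))) r := by
          intro r
          have h1 : HasDerivAt (fun r : ℝ => -(b * r ^ 2)) (-(b * (2 * r))) r := by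
            simpa using ((hasDerivAt_pow 2 r).const_mul b).fun_neg
          have h2 := (h1.exp.div_const (2 * b)).fun_neg
          refine h2.congr_deriv ?_
          field_simp
        rw [intervalIntegral.integral_eq_sub_of_hasDerivAt (fun r _ => key r)]
        · rw [Real.sq_sqrt hR]
          have h0 : b * 0 ^ 2 = 0 := by ring
          rw [h0, neg_zero, Real.exp_zero]
          field_simp
          ring
        · exact (Continuous.intervalIntegrable (by fun_prop) _ _)

theorem integrable_aux (n : ℕ) (lam : ℝ) (hlam : 0 ≤ lam) (a : Fin n → ℝ) :
    Integrable (Set.indicator {z : Fin n → ℂ | ∑ j, ‖z j‖ ^ 2 ≤ lam}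
      (fun z => Real.exp (-∑ j, a j * ‖z j‖ ^ 2))) := by
  have hcont : Continuous fun z : Fin n → ℂ => ∑ j, ‖z j‖ ^ 2 := by
    exact continuous_finset_sum _ fun j _ => (continuous_norm.comp (continuous_apply j)).pow 2
  have hS : MeasurableSet {z : Fin n → ℂ | ∑ j, ‖z j‖ ^ 2 ≤ lam} :=
    measurableSet_le hcont.measurable measurable_const
  refine IntegrableOn.integrable_indicator ?_ hS
  have hsub : {z : Fin n → ℂ | ∑ j, ‖z j‖ ^ 2 ≤ lam}
      ⊆ Metric.closedBall 0 (Real.sqrt lam) := by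
    intro z hz
    simp only [Set.mem_setOf_eq] at hz
    rw [Metric.mem_closedBall, dist_zero_right]
    rw [pi_norm_le_iff_of_nonneg (Real.sqrt_nonneg lam)]
    intro i
    rw [Real.le_sqrt (norm_nonneg _) hlam]
    exact le_trans (Finset.single_le_sum (f := fun j => ‖z j‖ ^ 2)
      (fun j _ => by positivity) (Finset.mem_univ i)) hz
  refine Measure.integrableOn_of_bounded (M := Real.exp (lam * ∑ j, |a j|)) ?_ ?_ ?_
  · exact ((measure_mono hsub).trans_lt measure_closedBall_lt_top).ne
  · refine Continuous.aestronglyMeasurable ?_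
    have : Continuous fun z : Fin n → ℂ => ∑ j, a j * ‖z j‖ ^ 2 :=
      continuous_finset_sum _ fun j _ => continuous_const.mul
        ((continuous_norm.comp (continuous_apply j)).pow 2)
    exact this.neg.rexp
  · refine (ae_restrict_mem hS).mono fun z hz => ?_
    simp only [Set.mem_setOf_eq] at hz
    rw [Real.norm_eq_abs, Real.abs_exp, Real.exp_le_exp]
    have hle : ∀ j, ‖z j‖ ^ 2 ≤ lam := fun j =>
      le_trans (Finset.single_le_sum (f := fun j => ‖z j‖ ^ 2)
        (fun j _ => by positivity) (Finset.mem_univ j)) hz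
    calc -∑ j, a j * ‖z j‖ ^ 2 = ∑ j, -(a j * ‖z j‖ ^ 2) := by
          rw [← Finset.sum_neg_distrib]
      _ ≤ ∑ j, lam * |a j| := by
          refine Finset.sum_le_sum fun j _ => ?_
          have h1 : (0:ℝ) ≤ ‖z j‖ ^ 2 := by positivity
          have h2 := hle j
          have h3 : -a j ≤ |a j| := neg_le_abs _
          have h4 : (0:ℝ) ≤ |a j| := abs_nonneg _
          nlinarith
      _ = lam * ∑ j, |a j| := by rw [Finset.mul_sum]

theorem erase_last_eq (n : ℕ) :
    (Finset.univ : Finset (Fin (n+1))).erase (Fin.last n)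
      = Finset.image Fin.castSucc Finset.univ := by
  ext j
  simp only [Finset.mem_erase, Finset.mem_univ, and_true, Finset.mem_image, true_and]
  rw [← Fin.exists_castSucc_eq]

theorem prod_erase_last (n : ℕ) (f : Fin (n+1) → ℝ) :
    ∏ j ∈ (Finset.univ : Finset (Fin (n+1))).erase (Fin.last n), f j
      = ∏ j : Fin n, f j.castSucc := by
  rw [erase_last_eq, Finset.prod_image (fun a _ b _ h => Fin.castSucc_injective n h)]

theorem erase_castSucc_eq (n : ℕ) (i : Fin n) :
    (Finset.univ : Finset (Fin (n+1))).erase i.castSucc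
      = insert (Fin.last n) (Finset.image Fin.castSucc (Finset.univ.erase i)) := by
  ext j
  simp only [Finset.mem_erase, Finset.mem_univ, and_true, Finset.mem_insert, Finset.mem_image,
    true_and]
  constructor
  · intro hj
    rcases eq_or_ne j (Fin.last n) with h | h
    · exact Or.inl h
    · obtain ⟨k, rfl⟩ := Fin.exists_castSucc_eq.mpr h
      exact Or.inr ⟨k, ⟨fun hk => hj (by rw [hk]), rfl⟩⟩
  · rintro (rfl | ⟨k, hk, rfl⟩)
    · exact (Fin.castSucc_lt_last i).ne'
    · exact fun h => hk (Fin.castSucc_injective n h)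

theorem prod_erase_castSucc (n : ℕ) (i : Fin n) (f : Fin (n+1) → ℝ) :
    ∏ j ∈ (Finset.univ : Finset (Fin (n+1))).erase i.castSucc, f j
      = f (Fin.last n) * ∏ j ∈ (Finset.univ : Finset (Fin n)).erase i, f j.castSucc := by
  rw [erase_castSucc_eq, Finset.prod_insert, Finset.prod_image
    (fun a _ b _ h => Fin.castSucc_injective n h)]
  simp only [Finset.mem_image]
  rintro ⟨k, -, hk⟩
  exact (Fin.castSucc_lt_last k).ne hk


theorem master (n : ℕ) : ∀ (c : Fin n → ℝ), (∀ j, c j ≠ 0) → Function.Injective c →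
    ∀ lam : ℝ, 0 ≤ lam →
    (∫ z : Fin n → ℂ, Set.indicator {z : Fin n → ℂ | ∑ j, ‖z j‖ ^ 2 ≤ lam}
        (fun z => Real.exp (-∑ j, c j * ‖z j‖ ^ 2)) z)
      = π ^ n * ((∏ j, (c j)⁻¹) -
          ∑ i, Real.exp (-lam * c i) /
            (c i * ∏ j ∈ Finset.univ.erase i, (c j - c i))) := by
  induction n with
  | zero =>
    intro c hc0 hcinj lam hlam
    have huniv : {z : Fin 0 → ℂ | ∑ j, ‖z j‖ ^ 2 ≤ lam} = Set.univ := by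
      ext z; simp [hlam]
    rw [huniv, Set.indicator_univ]
    simp only [Finset.univ_eq_empty, Finset.sum_empty, Finset.prod_empty, neg_zero,
      Real.exp_zero, pow_zero, sub_zero, one_mul]
    rw [MeasureTheory.integral_unique]
    simp [Measure.real, MeasureTheory.volume_pi, MeasureTheory.Measure.pi_empty_univ]
  | succ n IH =>
    intro c hc0 hcinj lam hlam
    set b : ℝ := c (Fin.last n) with hb_def
    set d : Fin n → ℝ := fun j => c j.castSucc with hd_def
    have hb0 : b ≠ 0 := hc0 _
    have hd0 : ∀ j, d j ≠ 0 := fun j => hc0 _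
    have hdinj : Function.Injective d := fun a a' h => by
      have := hcinj h
      exact Fin.castSucc_injective n this
    have hdb : ∀ j, d j ≠ b := fun j h =>
      (Fin.castSucc_lt_last j).ne (hcinj h)
    have hdb0 : ∀ j, d j - b ≠ 0 := fun j => sub_ne_zero.mpr (hdb j)
    have hdbinj : Function.Injective (fun j => d j - b) := fun a a' h => by
      apply hdinj; dsimp at h; linarith [sub_left_injective.eq_iff.mp h]
    -- abbreviations
    set G : (Fin (n+1) → ℂ) → ℝ :=
      Set.indicator {z : Fin (n+1) → ℂ | ∑ j, ‖z j‖ ^ 2 ≤ lam}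
        (fun z => Real.exp (-∑ j, c j * ‖z j‖ ^ 2)) with hG_def
    set e := MeasurableEquiv.piFinSuccAbove (fun _ : Fin (n+1) => ℂ) (Fin.last n) with he_def
    have hmp : MeasurePreserving e.symm
        ((volume : Measure ℂ).prod (volume : Measure (Fin n → ℂ))) volume := by
      have h1 := volume_preserving_piFinSuccAbove (fun _ : Fin (n+1) => ℂ) (Fin.last n)
      have h2 := h1.symm e
      simpa [Measure.volume_eq_prod] using h2
    have hGint : Integrable G := integrable_aux (n+1) lam hlam c
    have hGcomp : Integrable (fun p : ℂ × (Fin n → ℂ) => G (e.symm p))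
        ((volume : Measure ℂ).prod (volume : Measure (Fin n → ℂ))) := by
      exact (hmp.integrable_comp_emb e.symm.measurableEmbedding).mpr hGint
    -- pointwise description of G ∘ e.symm
    have hpt : ∀ (z : ℂ) (w : Fin n → ℂ), G (e.symm (z, w)) =
        Set.indicator {z : ℂ | ‖z‖ ^ 2 ≤ lam - ∑ j, ‖w j‖ ^ 2}
          (fun z => Real.exp (-(b * ‖z‖ ^ 2))) z
        * Real.exp (-∑ j, d j * ‖w j‖ ^ 2) := by
      intro z w
      have habs : ∀ (g : ℂ → ℝ), ∑ j, g ((e.symm (z, w)) j)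
          = g z + ∑ j, g (w j) := by
        intro g
        rw [Fin.sum_univ_succAbove (fun j => g ((e.symm (z, w)) j)) (Fin.last n)]
        simp [he_def, MeasurableEquiv.piFinSuccAbove_symm_apply, Fin.insertNthEquiv,
          Fin.insertNth_apply_same, Fin.insertNth_apply_succAbove]
      have habs2 : ∀ (g : Fin (n+1) → ℂ → ℝ), ∑ j, g j ((e.symm (z, w)) j)
          = g (Fin.last n) z + ∑ j, g j.castSucc (w j) := by
        intro g
        rw [Fin.sum_univ_succAbove (fun j => g j ((e.symm (z, w)) j)) (Fin.last n)]
        simp [he_def, MeasurableEquiv.piFinSuccAbove_symm_apply, Fin.insertNthEquiv,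
          Fin.insertNth_apply_same, Fin.insertNth_apply_succAbove]
      rw [hG_def]
      simp only [Set.indicator_apply, Set.mem_setOf_eq]
      simp only [habs (fun u => ‖u‖ ^ 2),
        habs2 (fun j u => c j * ‖u‖ ^ 2)]
      have hcond : ‖z‖ ^ 2 ≤ lam - ∑ j, ‖w j‖ ^ 2
          ↔ ‖z‖ ^ 2 + ∑ j, ‖w j‖ ^ 2 ≤ lam := le_sub_iff_add_le
      by_cases h : ‖z‖ ^ 2 ≤ lam - ∑ j, ‖w j‖ ^ 2
      · rw [if_pos (hcond.mp h), if_pos h, ← Real.exp_add]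
        congr 1
        simp only [hb_def, hd_def]
        ring
      · rw [if_neg (fun hh => h (hcond.mpr hh)), if_neg h, zero_mul]
    -- inner integral evaluation
    have hinner : ∀ w : Fin n → ℂ, (∫ z : ℂ, G (e.symm (z, w)))
        = (π / b) * Set.indicator {w : Fin n → ℂ | ∑ j, ‖w j‖ ^ 2 ≤ lam}
            (fun w => Real.exp (-∑ j, d j * ‖w j‖ ^ 2)) w
          - (π / b * Real.exp (-(b * lam))) *
            Set.indicator {w : Fin n → ℂ | ∑ j, ‖w j‖ ^ 2 ≤ lam}
              (fun w => Real.exp (-∑ j, (d j - b) * ‖w j‖ ^ 2)) w := by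
      intro w
      simp_rw [hpt _ w]
      rw [integral_mul_const]
      by_cases hw : ∑ j, ‖w j‖ ^ 2 ≤ lam
      · have hmem : w ∈ {w : Fin n → ℂ | ∑ j, ‖w j‖ ^ 2 ≤ lam} := hw
        rw [disc_gauss b _ hb0 (by linarith), Set.indicator_of_mem hmem,
          Set.indicator_of_mem hmem]
        have hsplit : Real.exp (-(b * (lam - ∑ j, ‖w j‖ ^ 2)))
            * Real.exp (-∑ j, d j * ‖w j‖ ^ 2)
            = Real.exp (-(b * lam)) * Real.exp (-∑ j, (d j - b) * ‖w j‖ ^ 2) := by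
          rw [← Real.exp_add, ← Real.exp_add]
          congr 1
          have hexp : ∑ j, (d j - b) * ‖w j‖ ^ 2
              = (∑ j, d j * ‖w j‖ ^ 2) - b * ∑ j, ‖w j‖ ^ 2 := by
            rw [Finset.mul_sum, ← Finset.sum_sub_distrib]
            exact Finset.sum_congr rfl (fun j _ => by ring)
          rw [hexp]
          ring
        linear_combination (-(π / b)) * hsplit
      · have hempty : {z : ℂ | ‖z‖ ^ 2 ≤ lam - ∑ j, ‖w j‖ ^ 2} = ∅ := by
          ext z
          simp only [Set.mem_setOf_eq, Set.mem_empty_iff_false, iff_false, not_le]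
          push_neg at hw
          nlinarith [norm_nonneg (z : ℂ), sq_nonneg (‖z‖)]
        have hmem' : w ∉ {w : Fin n → ℂ | ∑ j, ‖w j‖ ^ 2 ≤ lam} := hw
        rw [hempty, Set.indicator_of_notMem hmem', Set.indicator_of_notMem hmem']
        simp
    -- assemble
    have step1 : (∫ z : Fin (n+1) → ℂ, G z)
        = ∫ p : ℂ × (Fin n → ℂ), G (e.symm p)
            ∂((volume : Measure ℂ).prod (volume : Measure (Fin n → ℂ))) :=
      (hmp.integral_comp e.symm.measurableEmbedding G).symm
    rw [step1, integral_prod_symm _ hGcomp]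
    simp_rw [hinner]
    rw [integral_sub ((integrable_aux n lam hlam d).const_mul _)
      ((integrable_aux n lam hlam (fun j => d j - b)).const_mul _),
      integral_const_mul, integral_const_mul]
    rw [IH d hd0 hdinj lam hlam, IH (fun j => d j - b) hdb0 hdbinj lam hlam]
    simp only [sub_sub_sub_cancel_right]
    -- split RHS over castSucc/last
    rw [Fin.prod_univ_castSucc (f := fun j => (c j)⁻¹),
      Fin.sum_univ_castSucc (f := fun i => Real.exp (-lam * c i) /
        (c i * ∏ j ∈ Finset.univ.erase i, (c j - c i)))]
    have hprodlast : ∏ j ∈ (Finset.univ : Finset (Fin (n+1))).erase (Fin.last n),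
        (c j - c (Fin.last n)) = ∏ j, (d j - b) :=
      prod_erase_last n (fun j => c j - c (Fin.last n))
    have hprodcast : ∀ i : Fin n, ∏ j ∈ (Finset.univ : Finset (Fin (n+1))).erase i.castSucc,
        (c j - c i.castSucc) = (b - d i) * ∏ j ∈ Finset.univ.erase i, (d j - d i) :=
      fun i => prod_erase_castSucc n i (fun j => c j - c i.castSucc)
    simp only [hprodlast, hprodcast]
    -- now pure algebra
    have hR0 : ∀ i : Fin n, (∏ j ∈ Finset.univ.erase i, (d j - d i)) ≠ 0 := fun i =>
      Finset.prod_ne_zero_iff.mpr fun j hj =>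
        sub_ne_zero.mpr fun hh => (Finset.mem_erase.mp hj).1 (hdinj hh)
    have hQb0 : (∏ j, (d j - b)) ≠ 0 :=
      Finset.prod_ne_zero_iff.mpr fun j _ => hdb0 j
    have hterm : ∀ i ∈ (Finset.univ : Finset (Fin n)),
        Real.exp (-lam * d i) / (d i * ∏ j ∈ Finset.univ.erase i, (d j - d i))
          - Real.exp (-(b * lam)) * (Real.exp (-lam * (d i - b)) /
              ((d i - b) * ∏ j ∈ Finset.univ.erase i, (d j - d i)))
        = b * (Real.exp (-lam * c i.castSucc) /
            (c i.castSucc * ((b - d i) * ∏ j ∈ Finset.univ.erase i, (d j - d i)))) := by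
      intro i _
      have hce : c i.castSucc = d i := rfl
      rw [hce]
      have hEe : Real.exp (-(b * lam)) * Real.exp (-lam * (d i - b))
          = Real.exp (-lam * d i) := by
        rw [← Real.exp_add]; congr 1; ring
      rw [mul_div_assoc'] -- E * (x / y) = E * x / y
      rw [hEe]
      have h1 : d i ≠ 0 := hd0 i
      have h2 : d i - b ≠ 0 := hdb0 i
      have h3 : b - d i ≠ 0 := fun h => h2 (by linarith)
      have h4 := hR0 i
      field_simp
      ring
    have hsumstep : (∑ i, Real.exp (-lam * d i) / (d i * ∏ j ∈ Finset.univ.erase i, (d j - d i)))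
          - Real.exp (-(b * lam)) * ∑ i, Real.exp (-lam * (d i - b)) /
              ((d i - b) * ∏ j ∈ Finset.univ.erase i, (d j - d i))
        = b * ∑ i, Real.exp (-lam * c i.castSucc) /
            (c i.castSucc * ((b - d i) * ∏ j ∈ Finset.univ.erase i, (d j - d i))) := by
      rw [Finset.mul_sum, Finset.mul_sum, ← Finset.sum_sub_distrib]
      exact Finset.sum_congr rfl hterm
    have hP2 : (∏ j, (d j - b)⁻¹) = (∏ j, (d j - b))⁻¹ := by
      rw [← Finset.prod_inv_distrib]
    have hEL : Real.exp (-lam * c (Fin.last n)) = Real.exp (-(b * lam)) := by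
      congr 1; rw [← hb_def]; ring
    rw [hEL, hP2]
    set A₁ := ∏ j, (d j)⁻¹ with hA₁
    set Qb := ∏ j, (d j - b) with hQb
    set S₁ := ∑ i, Real.exp (-lam * d i) / (d i * ∏ j ∈ Finset.univ.erase i, (d j - d i))
      with hS₁
    set S₂ := ∑ i, Real.exp (-lam * (d i - b)) /
        ((d i - b) * ∏ j ∈ Finset.univ.erase i, (d j - d i)) with hS₂
    set S₃ := ∑ i, Real.exp (-lam * c i.castSucc) /
        (c i.castSucc * ((b - d i) * ∏ j ∈ Finset.univ.erase i, (d j - d i))) with hS₃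
    set E := Real.exp (-(b * lam)) with hE
    calc π / b * (π ^ n * (A₁ - S₁)) - π / b * E * (π ^ n * (Qb⁻¹ - S₂))
        = π / b * π ^ n * ((S₁ - E * S₂) * (-1) + (A₁ - E * Qb⁻¹)) := by ring
      _ = π / b * π ^ n * ((b * S₃) * (-1) + (A₁ - E * Qb⁻¹)) := by rw [hsumstep]
      _ = π ^ (n + 1) * ((∏ j, (d j)⁻¹) * (c (Fin.last n))⁻¹ -
            (S₃ + E / (c (Fin.last n) * Qb))) := by
          rw [← hb_def, ← hA₁]
          field_simp
          ring


/-- The Duistermaat–Heckman fixed-point formula for the symplectic cut of `ℂⁿ` at level `λ`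
with respect to the diagonal circle action: for distinct nonzero reals `c₁, …, cₙ`,
`∫_{∑|zⱼ|² ≤ λ} exp(−∑ cⱼ|zⱼ|²) dz
  = πⁿ (∏ⱼ cⱼ⁻¹ − ∑ᵢ e^{−λcᵢ} / (cᵢ ∏_{j≠i} (cⱼ − cᵢ)))`. -/
theorem symplectic_cut_gaussian_fixed_point_formula
    (n : ℕ) (hn : 1 ≤ n) (lam : ℝ) (hlam : 0 < lam)
    (c : Fin n → ℝ) (hc0 : ∀ j, c j ≠ 0) (hcinj : Function.Injective c) :
    (∫ z in {z : Fin n → ℂ | ∑ j, ‖z j‖ ^ 2 ≤ lam},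
        Real.exp (-∑ j, c j * ‖z j‖ ^ 2)) =
      π ^ n * ((∏ j, (c j)⁻¹) -
        ∑ i, Real.exp (-lam * c i) /
          (c i * ∏ j ∈ Finset.univ.erase i, (c j - c i))) := by
  have hcont : Continuous fun z : Fin n → ℂ => ∑ j, ‖z j‖ ^ 2 :=
    continuous_finset_sum _ fun j _ => (continuous_norm.comp (continuous_apply j)).pow 2
  have hS : MeasurableSet {z : Fin n → ℂ | ∑ j, ‖z j‖ ^ 2 ≤ lam} :=
    measurableSet_le hcont.measurable measurable_const
  rw [← MeasureTheory.integral_indicator hS]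
  exact master n c hc0 hcinj lam hlam.le
end

section
/- Let m ≥ 1, let a₁, …, aₘ be pairwise distinct complex numbers, let p ∈ ℂ[X] be a polynomial, let λ ∈ ℂ, and let R > max_i |a_i|. Then (1/(2πi)) ∮_{|z|=R} e^{λz} p(z) / ∏_{i=1}^{m} (z − a_i) dz = ∑_{i=1}^{m} e^{λ a_i} p(a_i) / ∏_{j≠i} (a_i − a_j). -/
open Finset Polynomial

-- partial fraction identity
lemma pf_key (m : ℕ) (hm : 1 ≤ m) (a : Fin m → ℂ) (ha : Function.Injective a)
    (z : ℂ) (hz : ∀ i, z ≠ a i) :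
    (∏ i, (z - a i))⁻¹ =
      ∑ i, (∏ j ∈ Finset.univ.erase i, (a i - a j))⁻¹ * (z - a i)⁻¹ := by
  have hinj : Set.InjOn a (Finset.univ : Finset (Fin m)) := fun x _ y _ h => ha h
  have h1 : Polynomial.eval z (Lagrange.interpolate Finset.univ a 1) = 1 := by
    rw [Lagrange.interpolate_one hinj ⟨⟨0, hm⟩, mem_univ _⟩, Polynomial.eval_one]
  rw [Lagrange.interpolate_apply, Polynomial.eval_finset_sum] at h1
  simp only [Pi.one_apply, map_one, one_mul] at h1
  have hbasis : ∀ i : Fin m, Polynomial.eval z (Lagrange.basis Finset.univ a i) =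
      (∏ j ∈ Finset.univ.erase i, (a i - a j))⁻¹ * ∏ j ∈ Finset.univ.erase i, (z - a j) := by
    intro i
    rw [Lagrange.basis, Polynomial.eval_prod, ← Finset.prod_inv_distrib, ← Finset.prod_mul_distrib]
    refine Finset.prod_congr rfl fun j hj => ?_
    simp [Lagrange.basisDivisor]
  have hne : ∀ i : Fin m, z - a i ≠ 0 := fun i => sub_ne_zero.mpr (hz i)
  have hprod : (∏ i, (z - a i)) ≠ 0 := Finset.prod_ne_zero_iff.mpr fun i _ => hne i
  have key : ∀ i : Fin m, (z - a i)⁻¹ =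
      (∏ j ∈ Finset.univ.erase i, (z - a j)) * (∏ j, (z - a j))⁻¹ := by
    intro i
    rw [← Finset.mul_prod_erase Finset.univ _ (mem_univ i), mul_inv,
      ← mul_assoc, mul_comm ((∏ j ∈ Finset.univ.erase i, (z - a j))) _, mul_assoc,
      mul_inv_cancel₀ (Finset.prod_ne_zero_iff.mpr fun j _ => hne j), mul_one]
  calc (∏ i, (z - a i))⁻¹ = (∑ i, Polynomial.eval z (Lagrange.basis Finset.univ a i))
        * (∏ i, (z - a i))⁻¹ := by
        rw [h1, one_mul]
    _ = ∑ i, (∏ j ∈ Finset.univ.erase i, (a i - a j))⁻¹ * (z - a i)⁻¹ := by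
        rw [Finset.sum_mul]
        refine Finset.sum_congr rfl fun i _ => ?_
        rw [hbasis i, key i, ← Finset.prod_inv_distrib, mul_assoc]

lemma circleIntegral_finset_sum {ι : Type*} (s : Finset ι) (g : ι → ℂ → ℂ) (c : ℂ) (R : ℝ)
    (h : ∀ i ∈ s, CircleIntegrable (g i) c R) :
    (∮ z in C(c, R), ∑ i ∈ s, g i z) = ∑ i ∈ s, ∮ z in C(c, R), g i z := by
  simp only [circleIntegral, smul_sum]
  exact intervalIntegral.integral_finset_sum fun i hi => (h i hi).out


/-- The one-dimensional Jeffrey–Kirwan residue as a contour integral: for pairwise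
distinct `a₁, …, aₘ ∈ ℂ`, a polynomial `p`, `λ ∈ ℂ` and a radius `R` exceeding all
`|aᵢ|`, the normalized circle integral of `e^{λz} p(z)/∏ᵢ(z − aᵢ)` over `|z| = R` equals
the sum of the residues `e^{λaᵢ} p(aᵢ)/∏_{j≠i}(aᵢ − aⱼ)` at all the simple poles. -/
theorem circleIntegral_exp_rational_eq_sum_residues
    (m : ℕ) (hm : 1 ≤ m) (a : Fin m → ℂ) (ha : Function.Injective a)
    (p : Polynomial ℂ) (lam : ℂ) (R : ℝ) (hR : ∀ i, ‖a i‖ < R) :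
    (1 / (2 * (Real.pi : ℂ) * Complex.I)) *
        (∮ z in C(0, R), Complex.exp (lam * z) * p.eval z / ∏ i, (z - a i)) =
      ∑ i, Complex.exp (lam * a i) * p.eval (a i) /
        ∏ j ∈ Finset.univ.erase i, (a i - a j) := by
  set f : ℂ → ℂ := fun z => Complex.exp (lam * z) * p.eval z with hf_def
  have hf : Differentiable ℂ f := by
    exact (Complex.differentiable_exp.comp (differentiable_id.const_mul lam)).mul
      (Polynomial.differentiable p)
  have hR0 : 0 < R := lt_of_le_of_lt (norm_nonneg _) (hR ⟨0, hm⟩)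
  set g : Fin m → ℂ → ℂ := fun i z =>
    (∏ j ∈ Finset.univ.erase i, (a i - a j))⁻¹ * ((z - a i)⁻¹ * f z) with hg_def
  have hsphere : ∀ z ∈ Metric.sphere (0 : ℂ) R, ∀ i, z ≠ a i := by
    intro z hz i h
    rw [mem_sphere_iff_norm, sub_zero] at hz
    rw [h] at hz
    exact (hR i).ne hz
  have heq : Set.EqOn (fun z => f z / ∏ i, (z - a i)) (fun z => ∑ i, g i z)
      (Metric.sphere (0 : ℂ) R) := by
    intro z hz
    simp only [div_eq_mul_inv, pf_key m hm a ha z (hsphere z hz), Finset.mul_sum]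
    exact Finset.sum_congr rfl fun i _ => by ring
  have hgi : ∀ i : Fin m, CircleIntegrable (g i) 0 R := by
    intro i
    apply ContinuousOn.circleIntegrable hR0.le
    apply ContinuousOn.mul continuousOn_const
    apply ContinuousOn.mul
    · exact ContinuousOn.inv₀ (by fun_prop) fun z hz => sub_ne_zero.mpr (hsphere z hz i)
    · exact hf.continuous.continuousOn
  have hcauchy : ∀ i : Fin m, (∮ z in C(0, R), (z - a i)⁻¹ * f z) =
      (2 * (Real.pi : ℂ) * Complex.I) * f (a i) := by
    intro i
    have hw : a i ∈ Metric.ball (0 : ℂ) R := by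
      rw [Metric.mem_ball, dist_zero_right]; exact hR i
    have := (hf.differentiableOn (s := Metric.closedBall (0:ℂ) R)).circleIntegral_sub_inv_smul hw
    simpa [smul_eq_mul] using this
  rw [circleIntegral.integral_congr hR0.le heq,
    circleIntegral_finset_sum Finset.univ g 0 R (fun i _ => hgi i)]
  have hstep : ∀ i : Fin m, (∮ z in C(0, R), g i z) =
      (∏ j ∈ Finset.univ.erase i, (a i - a j))⁻¹ * ((2 * (Real.pi : ℂ) * Complex.I) * f (a i)) := by
    intro i
    have : g i = fun z => (∏ j ∈ Finset.univ.erase i, (a i - a j))⁻¹ • ((z - a i)⁻¹ * f z) := by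
      funext z; simp [hg_def, smul_eq_mul]
    rw [this, circleIntegral.integral_smul, hcauchy i, smul_eq_mul]
  rw [Finset.mul_sum]
  refine Finset.sum_congr rfl fun i _ => ?_
  rw [hstep i, div_eq_mul_inv]
  have h2pi : (2 * (Real.pi : ℂ) * Complex.I) ≠ 0 := by
    simp [Real.pi_ne_zero, Complex.I_ne_zero]
  field_simp
  simp only [hf_def]
  ring
end

section
/- Let K be a field, let n ≥ 1, let A be an n×n matrix over K, and let b ∈ Kⁿ. Assume that for every k ∈ {1, …, n} the square submatrix of A on rows and columns {k, …, n} has nonzero determinant (in particular A is invertible, so the affine system ℓ_i(x) = ∑_j A_{ij} x_j + b_i = 0, i = 1,…,n, has a unique solution x* = −A⁻¹b). Perform back-substitution: set ℓ_i^{(n)} = ℓ_i for i = 1, …, n; for k = n down to 1, the coefficient p_k of x_k in the affine form ℓ_k^{(k)} is nonzero, and substituting the solution x_k = σ_k(x₁,…,x_{k−1}) of ℓ_k^{(k)} = 0 into ℓ_i^{(k)} for i < k yields affine forms ℓ_i^{(k−1)} in the variables x₁, …, x_{k−1}. Then: (i) each pivot satisfies p_k = det A_{\{k,…,n\}} / det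 A_{\{k+1,…,n\}} (where A_S denotes the submatrix of A on rows and columns S and the determinant of the empty matrix is 1), so that the product p₁ p₂ ⋯ pₙ equals det A; and (ii) for every polynomial g ∈ K[x₁, …, xₙ], substituting successively x_n = σ_n, x_{n−1} = σ_{n−1}, …, x₁ = σ₁ into g yields the scalar g(x*); hence the iterated residue of the rational function g/(ℓ₁⋯ℓₙ), taken successively in the variables x_n, …, x₁ at the simple poles determined by ℓ_n^{(n)}, …, ℓ₁^{(1)} — namely the scalar g(x*)/(p₁⋯pₙ) — equals g(x*)/det A. -/
open Finset

/-- One step of back-substitution: given the current system of affine forms with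
coefficient matrix `C` and constant vector `d` (the pair `Cd`), solve the `k`-th form
`∑ⱼ C k j • xⱼ + d k = 0` for `x_k` (treating `C k k` as the pivot) and substitute the
result into all the other forms. -/
noncomputable def elimStep {K : Type*} [Field K] {n : ℕ} (k : Fin n)
    (Cd : Matrix (Fin n) (Fin n) K × (Fin n → K)) :
    Matrix (Fin n) (Fin n) K × (Fin n → K) :=
  ⟨fun i j => Cd.1 i j - Cd.1 i k * Cd.1 k j / Cd.1 k k,
    fun i => Cd.2 i - Cd.1 i k * Cd.2 k / Cd.1 k k⟩

/-- The state of back-substitution after `s` steps: starting from the original system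
`ℓᵢ(x) = ∑ⱼ A i j xⱼ + b i`, the variables `x_{n-1}, x_{n-2}, …, x_{n-s}` (0-indexed)
have been successively eliminated. -/
noncomputable def elim {K : Type*} [Field K] {n : ℕ} (hn : 0 < n)
    (A : Matrix (Fin n) (Fin n) K) (b : Fin n → K) :
    ℕ → Matrix (Fin n) (Fin n) K × (Fin n → K)
  | 0 => (A, b)
  | s + 1 => elimStep ⟨n - 1 - s, by omega⟩ (elim hn A b s)

/-- The pivot `p_k`: the coefficient of `x_k` in the form `ℓ_k^{(k)}` obtained after the
variables `x_{k+1}, …, x_{n-1}` have been eliminated. -/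
noncomputable def pivot {K : Type*} [Field K] {n : ℕ} (hn : 0 < n)
    (A : Matrix (Fin n) (Fin n) K) (b : Fin n → K) (k : Fin n) : K :=
  (elim hn A b (n - 1 - k.1)).1 k k

/-- The affine function `σ_k` of the variables `x₀, …, x_{k-1}` obtained by solving
`ℓ_k^{(k)} = 0` for `x_k`. -/
noncomputable def backSub {K : Type*} [Field K] {n : ℕ} (hn : 0 < n)
    (A : Matrix (Fin n) (Fin n) K) (b : Fin n → K) (k : Fin n) (x : Fin n → K) : K :=
  -((∑ j ∈ Finset.univ.filter (fun j : Fin n => j < k),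
        (elim hn A b (n - 1 - k.1)).1 k j * x j) +
      (elim hn A b (n - 1 - k.1)).2 k) / pivot hn A b k

/-- Substituting `x_k = σ_k(x₀, …, x_{k-1})` into a function `g` of the variables
`x₀, …, x_{n-1}`. -/
noncomputable def substOne {K : Type*} [Field K] {n : ℕ} (hn : 0 < n)
    (A : Matrix (Fin n) (Fin n) K) (b : Fin n → K) (k : Fin n)
    (g : (Fin n → K) → K) : (Fin n → K) → K :=
  fun x => g (Function.update x k (backSub hn A b k x))

/-- Successive substitution of `x_{n-1} = σ_{n-1}`, then `x_{n-2} = σ_{n-2}`, …; after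
`s` steps the variables `x_{n-1}, …, x_{n-s}` have been substituted away. -/
noncomputable def substAll {K : Type*} [Field K] {n : ℕ} (hn : 0 < n)
    (A : Matrix (Fin n) (Fin n) K) (b : Fin n → K) :
    ℕ → ((Fin n → K) → K) → ((Fin n → K) → K)
  | 0, g => g
  | s + 1, g => substOne hn A b ⟨n - 1 - s, by omega⟩ (substAll hn A b s g)

/-- The determinant of the square submatrix of `A` on the rows and columns
`{k, k+1, …, n-1}` (0-indexed); for `k = n` this is the determinant of the empty
matrix, namely `1`. -/
noncomputable def tailDet {K : Type*} [Field K] {n : ℕ}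
    (A : Matrix (Fin n) (Fin n) K) (k : ℕ) : K :=
  (A.submatrix (fun i : Fin (n - k) => (⟨k + i.1, by have := i.isLt; omega⟩ : Fin n))
      (fun i : Fin (n - k) => (⟨k + i.1, by have := i.isLt; omega⟩ : Fin n))).det

namespace BSR

variable {K : Type*} [Field K] {n : ℕ} (hn : 0 < n)
    (A : Matrix (Fin n) (Fin n) K) (b : Fin n → K)

def emb (m : ℕ) (i : Fin (n - m)) : Fin n := ⟨m + i.1, by have := i.isLt; omega⟩

noncomputable def Mmat (s : ℕ) : Matrix (Fin n) (Fin n) K :=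
  fun i j => if n - s ≤ i.1 then (elim hn A b (n - 1 - i.1)).1 i j else (elim hn A b s).1 i j

noncomputable def Nmat (m s : ℕ) : Matrix (Fin (n - m)) (Fin (n - m)) K :=
  (Mmat hn A b s).submatrix (emb m) (emb m)

noncomputable def Emat (m s : ℕ) (k : Fin n) (k' : Fin (n - m)) :
    Matrix (Fin (n - m)) (Fin (n - m)) K :=
  fun i j => if i = j then 1
    else if j = k' then -((elim hn A b s).1 (emb m i) k / (elim hn A b s).1 k k) else 0

theorem elim_inv (hdet : ∀ k : ℕ, k < n → tailDet A k ≠ 0) (s : ℕ) :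
    (∀ i j : Fin n, n - s ≤ j.1 → (elim hn A b s).1 i j = 0) ∧
    (∀ i j : Fin n, n - s ≤ i.1 → (elim hn A b s).1 i j = 0) ∧
    (∀ i : Fin n, n - s ≤ i.1 → (elim hn A b s).2 i = 0) ∧
    (∀ m : ℕ, s ≤ n - m → (Nmat hn A b m s).det = tailDet A m) := by
  induction s using Nat.strong_induction_on with
  | _ s ih =>
  match s with
  | 0 =>
    refine ⟨fun i j hj => absurd hj (by have := j.isLt; omega),
      fun i j hi => absurd hi (by have := i.isLt; omega),
      fun i hi => absurd hi (by have := i.isLt; omega), fun m _ => ?_⟩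
    have hM : Mmat hn A b 0 = A := by
      funext i j
      have hi := i.isLt
      simp only [Mmat]
      rw [if_neg (by omega)]
      rfl
    unfold Nmat tailDet
    rw [hM]
    rfl
  | s + 1 =>
    obtain ⟨ha, hb, hc, he⟩ := ih s (Nat.lt_succ_self s)
    set C := (elim hn A b s).1 with hCdef
    set d := (elim hn A b s).2 with hddef
    have hkn : n - 1 - s < n := by omega
    set k : Fin n := ⟨n - 1 - s, hkn⟩ with hkdef
    have hC1 : ∀ i j : Fin n, (elim hn A b (s + 1)).1 i j
        = C i j - C i k * C k j / C k k := fun i j => rfl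
    have hd1 : ∀ i : Fin n, (elim hn A b (s + 1)).2 i
        = d i - C i k * d k / C k k := fun i => rfl
    have hpiv : s < n → C k k ≠ 0 := by
      intro hs
      have h1 := he (n - 1 - s) (by omega)
      have htri : (Nmat hn A b (n - 1 - s) s).BlockTriangular OrderDual.toDual := by
        intro i j hij
        have hij' : i.1 < j.1 := hij
        have hiLt := i.isLt
        have hjLt := j.isLt
        simp only [Nmat, Matrix.submatrix_apply, Mmat, emb]
        by_cases hfr : n - s ≤ n - 1 - s + i.1
        · refine (if_pos hfr).trans ?_
          exact (ih (n - 1 - (n - 1 - s + i.1)) (by omega)).1 _ _ (by simp; omega)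
        · refine (if_neg hfr).trans ?_
          exact ha _ _ (by simp; omega)
      have hprod := Matrix.det_of_lowerTriangular _ htri
      rw [h1] at hprod
      have hne0 : (∏ i : Fin (n - (n - 1 - s)), Nmat hn A b (n - 1 - s) s i i) ≠ 0 := by
        rw [← hprod]
        exact hdet (n - 1 - s) (by omega)
      have hne : ∀ i, (Nmat hn A b (n - 1 - s) s) i i ≠ 0 :=
        fun i => Finset.prod_ne_zero_iff.mp hne0 i (mem_univ i)
      have h0 : (0 : ℕ) < n - (n - 1 - s) := by omega
      have := hne ⟨0, h0⟩
      simp only [Nmat, Matrix.submatrix_apply, Mmat, emb] at this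
      replace this := (if_neg (show ¬ (n - s ≤ n - 1 - s + 0) by omega)).symm.trans_ne this
      convert this using 3 <;> rfl
    refine ⟨?_, ?_, ?_, ?_⟩
    · -- columns ≥ n - (s+1) vanish
      intro i j hj
      rw [hC1]
      by_cases hj2 : n - s ≤ j.1
      · rw [ha i j hj2, ha k j hj2]
        simp
      · have hs : s < n := by have := j.isLt; omega
        have hjk : j = k := Fin.ext (by simp [hkdef]; omega)
        rw [hjk, mul_div_assoc, div_self (hpiv hs), mul_one, sub_self]
    · -- rows ≥ n - (s+1) vanish
      intro i j hi
      rw [hC1]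
      by_cases hi2 : n - s ≤ i.1
      · rw [hb i j hi2, hb i k hi2]
        simp
      · have hs : s < n := by have := i.isLt; omega
        have hik : i = k := Fin.ext (by simp [hkdef]; omega)
        rw [hik, mul_comm (C k k), mul_div_assoc, div_self (hpiv hs), mul_one, sub_self]
    · -- constants ≥ n - (s+1) vanish
      intro i hi
      rw [hd1]
      by_cases hi2 : n - s ≤ i.1
      · rw [hc i hi2, hb i k hi2]
        simp
      · have hs : s < n := by have := i.isLt; omega
        have hik : i = k := Fin.ext (by simp [hkdef]; omega)
        rw [hik, mul_comm (C k k), mul_div_assoc, div_self (hpiv hs), mul_one, sub_self]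
    · -- determinants preserved
      intro m hm
      have hs : s < n := by omega
      have hmk : m ≤ n - 1 - s := by omega
      have hk' : n - 1 - s - m < n - m := by omega
      set k' : Fin (n - m) := ⟨n - 1 - s - m, hk'⟩ with hk'def
      have hembk : emb m k' = k := Fin.ext (by simp [emb, hk'def, hkdef]; omega)
      have hE : (Emat hn A b m s k k').det = 1 := by
        have htri : (Emat hn A b m s k k').BlockTriangular id := by
          intro i j hij
          have hij' : j.1 < i.1 := hij
          simp only [Emat]
          rw [if_neg (by intro h; rw [h] at hij'; omega)]
          by_cases hjk : j = k'
          · rw [if_pos hjk]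
            have hCik : C (emb m i) k = 0 := by
              refine hb _ _ ?_
              have : (emb m i).1 = m + i.1 := rfl
              rw [hjk] at hij'
              simp only [hk'def] at hij'
              omega
            rw [← hCdef, hCik, zero_div, neg_zero]
          · rw [if_neg hjk]
        rw [Matrix.det_of_upperTriangular htri]
        refine Finset.prod_eq_one fun i _ => ?_
        simp [Emat]
      have hEN : Nmat hn A b m (s + 1) = Emat hn A b m s k k' * Nmat hn A b m s := by
        ext i j
        rw [Matrix.mul_apply]
        have hNk'j : Nmat hn A b m s k' j = C k (emb m j) := by
          simp only [Nmat, Matrix.submatrix_apply, Mmat, hembk]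
          rw [if_neg (by simp [hkdef]; omega)]
        have hEoff : ∀ i l : Fin (n - m), i ≠ l →
            Emat hn A b m s k k' i l
              = if l = k' then -(C (emb m i) k / C k k) else 0 := by
          intro i l h
          simp only [Emat]
          rw [if_neg h, ← hCdef]
        by_cases hik : i = k'
        · rw [hik]
          have hterm : ∀ l, Emat hn A b m s k k' k' l * Nmat hn A b m s l j
              = if l = k' then Nmat hn A b m s k' j else 0 := by
            intro l
            by_cases hl : l = k'
            · rw [if_pos hl, hl]
              simp [Emat]
            · rw [if_neg hl, hEoff _ _ (fun h => hl h.symm), if_neg hl, zero_mul]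
          rw [Finset.sum_congr rfl fun l _ => hterm l, Finset.sum_ite_eq' _ _ _,
            if_pos (mem_univ _)]
          rw [hNk'j]
          simp only [Nmat, Matrix.submatrix_apply, Mmat, hembk]
          rw [if_pos (by simp [hkdef]; omega)]
          have h2 : n - 1 - (k : Fin n).1 = s := by simp [hkdef]; omega
          rw [h2, ← hCdef]
        · have hterm : ∀ l, Emat hn A b m s k k' i l * Nmat hn A b m s l j
              = (if l = i then Nmat hn A b m s i j else 0)
                + (if l = k' then -(C (emb m i) k / C k k) * Nmat hn A b m s k' j
                    else 0) := by
            intro l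
            by_cases hl : l = i
            · rw [if_pos hl, if_neg (by rw [hl]; exact hik), hl]
              simp [Emat]
            · rw [if_neg hl, hEoff _ _ (fun h => hl h.symm), zero_add]
              by_cases hl2 : l = k'
              · rw [if_pos hl2, if_pos hl2, hl2]
              · rw [if_neg hl2, if_neg hl2, zero_mul]
          rw [Finset.sum_congr rfl fun l _ => hterm l, Finset.sum_add_distrib,
            Finset.sum_ite_eq' _ _ _, Finset.sum_ite_eq' _ _ _,
            if_pos (mem_univ _), if_pos (mem_univ _), hNk'j]
          have hine : (emb m i).1 ≠ n - 1 - s := by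
            intro h
            apply hik
            apply Fin.ext
            simp only [hk'def]
            have : (emb m i).1 = m + i.1 := rfl
            omega
          have hembi : (emb m i).1 = m + i.1 := rfl
          by_cases hfr : n - s ≤ (emb m i).1
          · have hCik : C (emb m i) k = 0 := hb _ _ hfr
            rw [hCik, zero_div, neg_zero, zero_mul, add_zero]
            simp only [Nmat, Matrix.submatrix_apply, Mmat]
            rw [if_pos hfr, if_pos (by omega)]
          · simp only [Nmat, Matrix.submatrix_apply, Mmat]
            rw [if_neg hfr, if_neg (by omega), hC1, ← hCdef]
            ring
      rw [hEN, Matrix.det_mul, hE, one_mul]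
      exact he m (by omega)

theorem prod_pivot_emb (hdet : ∀ k : ℕ, k < n → tailDet A k ≠ 0) (m : ℕ) (hm : m ≤ n) :
    ∏ i : Fin (n - m), pivot hn A b (emb m i) = tailDet A m := by
  obtain ⟨-, -, -, he⟩ := elim_inv hn A b hdet (n - m)
  have h1 := he m le_rfl
  have htri : (Nmat hn A b m (n - m)).BlockTriangular OrderDual.toDual := by
    intro i j hij
    have hij' : i.1 < j.1 := hij
    have hiLt := i.isLt
    have hjLt := j.isLt
    have hei : (emb m i : Fin n).1 = m + i.1 := rfl
    have hej : (emb m j : Fin n).1 = m + j.1 := rfl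
    simp only [Nmat, Matrix.submatrix_apply, Mmat]
    rw [if_pos (by omega)]
    exact (elim_inv hn A b hdet (n - 1 - (emb m i : Fin n).1)).1 _ _ (by omega)
  rw [Matrix.det_of_lowerTriangular _ htri] at h1
  rw [← h1]
  refine Finset.prod_congr rfl fun i _ => ?_
  have hei : (emb m i : Fin n).1 = m + i.1 := rfl
  have hiLt := i.isLt
  simp only [Nmat, Matrix.submatrix_apply, Mmat]
  rw [if_pos (by omega)]
  rfl

/-- the pivots as a function of a natural number index -/
noncomputable def pivN (i : ℕ) : K :=
  if h : i < n then pivot hn A b ⟨i, h⟩ else 1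

theorem prod_pivN (hdet : ∀ k : ℕ, k < n → tailDet A k ≠ 0) (m : ℕ) (hm : m ≤ n) :
    ∏ i ∈ Finset.range (n - m), pivN hn A b (m + i) = tailDet A m := by
  rw [← Fin.prod_univ_eq_prod_range (fun i => pivN hn A b (m + i)) (n - m)]
  rw [← prod_pivot_emb hn A b hdet m hm]
  refine Finset.prod_congr rfl fun i _ => ?_
  have hiLt := i.isLt
  have : m + i.1 < n := by omega
  simp only [pivN, dif_pos this]
  rfl

theorem tailDet_n : tailDet A n = 1 := by
  have : IsEmpty (Fin (n - n)) := by rw [Nat.sub_self]; infer_instance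
  exact Matrix.det_isEmpty

theorem tailDet_zero : tailDet A 0 = A.det := by
  unfold tailDet
  have h : (A.submatrix (fun i : Fin (n - 0) => (⟨0 + i.1, by have := i.isLt; omega⟩ : Fin n))
      (fun i : Fin (n - 0) => (⟨0 + i.1, by have := i.isLt; omega⟩ : Fin n))) = A := by
    ext i j
    simp only [Matrix.submatrix_apply]
    congr 1 <;> exact Fin.ext (Nat.zero_add _)
  rw [h]

theorem pivN_ratio (hdet : ∀ k : ℕ, k < n → tailDet A k ≠ 0) (m : ℕ) (hm : m < n) :
    pivN hn A b m = tailDet A m / tailDet A (m + 1) := by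
  have htail1 : tailDet A (m + 1) ≠ 0 := by
    rcases Nat.lt_or_ge (m + 1) n with h | h
    · exact hdet _ h
    · have hmn : m + 1 = n := by omega
      rw [hmn, tailDet_n]
      exact one_ne_zero
  have h1 := prod_pivN hn A b hdet m (le_of_lt hm)
  have h2 := prod_pivN hn A b hdet (m + 1) hm
  rw [show n - m = (n - (m + 1)) + 1 by omega, Finset.prod_range_succ'] at h1
  rw [Finset.prod_congr rfl (fun i _ => show pivN hn A b (m + (i + 1)) = pivN hn A b (m + 1 + i)
    by rw [show m + (i + 1) = m + 1 + i by omega]), h2, add_zero] at h1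
  field_simp
  rw [← h1]
  ring

theorem pivot_eq_ratio (hdet : ∀ k : ℕ, k < n → tailDet A k ≠ 0) (k : Fin n) :
    pivot hn A b k = tailDet A k.1 / tailDet A (k.1 + 1) := by
  have := pivN_ratio hn A b hdet k.1 k.isLt
  rwa [pivN, dif_pos k.isLt] at this

theorem pivot_ne_zero (hdet : ∀ k : ℕ, k < n → tailDet A k ≠ 0) (k : Fin n) :
    pivot hn A b k ≠ 0 := by
  rw [pivot_eq_ratio hn A b hdet k]
  have htail1 : tailDet A (k.1 + 1) ≠ 0 := by
    rcases Nat.lt_or_ge (k.1 + 1) n with h | h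
    · exact hdet _ h
    · have : k.1 + 1 = n := by have := k.isLt; omega
      rw [this, tailDet_n]
      exact one_ne_zero
  exact div_ne_zero (hdet k.1 k.isLt) htail1

theorem prod_pivot_eq_det (hdet : ∀ k : ℕ, k < n → tailDet A k ≠ 0) :
    (∏ k, pivot hn A b k) = A.det := by
  have h := prod_pivN hn A b hdet 0 (Nat.zero_le n)
  rw [tailDet_zero] at h
  rw [← h, ← Fin.prod_univ_eq_prod_range (fun i => pivN hn A b (0 + i)) (n - 0)]
  refine Finset.prod_congr rfl fun i _ => ?_
  have : (0 : ℕ) + i.1 < n := by have := i.isLt; omega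
  simp only [pivN, dif_pos this]
  congr 1
  exact Fin.ext (by simp)

theorem elim_solution (x : Fin n → K) (hx : ∀ i, (∑ j, A i j * x j) + b i = 0) (s : ℕ) :
    ∀ i, (∑ j, (elim hn A b s).1 i j * x j) + (elim hn A b s).2 i = 0 := by
  induction s with
  | zero => exact hx
  | succ s IH =>
    intro i
    set C := (elim hn A b s).1 with hCdef
    set d := (elim hn A b s).2 with hddef
    have hkn : n - 1 - s < n := by omega
    set k : Fin n := ⟨n - 1 - s, hkn⟩ with hkdef
    have hstep : (∑ j, (elim hn A b (s + 1)).1 i j * x j) + (elim hn A b (s + 1)).2 i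
        = ((∑ j, C i j * x j) + d i)
          - (C i k / C k k) * ((∑ j, C k j * x j) + d k) := by
      have h1 : ∀ j, (elim hn A b (s + 1)).1 i j * x j
          = C i j * x j - (C i k / C k k) * (C k j * x j) := by
        intro j
        show (C i j - C i k * C k j / C k k) * x j = _
        ring
      rw [Finset.sum_congr rfl fun j _ => h1 j, Finset.sum_sub_distrib, ← Finset.mul_sum]
      show _ + (d i - C i k * d k / C k k) = _
      ring
    rw [hstep, IH i, IH k]
    simp

theorem backSub_solution (hdet : ∀ k : ℕ, k < n → tailDet A k ≠ 0) (x y : Fin n → K)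
    (hx : ∀ i, (∑ j, A i j * x j) + b i = 0) (k : Fin n)
    (hy : ∀ j : Fin n, j < k → y j = x j) :
    backSub hn A b k y = x k := by
  have hpiv : pivot hn A b k ≠ 0 := pivot_ne_zero hn A b hdet k
  set s := n - 1 - k.1 with hsdef
  have hsol := elim_solution hn A b x hx s k
  have ha := (elim_inv hn A b hdet s).1
  have hsplit : (∑ j, (elim hn A b s).1 k j * x j)
      = (∑ j ∈ Finset.univ.filter (fun j : Fin n => j < k), (elim hn A b s).1 k j * x j)
        + (elim hn A b s).1 k k * x k := by
    rw [← Finset.sum_filter_add_sum_filter_not Finset.univ (fun j : Fin n => j < k)]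
    congr 1
    rw [Finset.sum_eq_single_of_mem k (by simp)]
    intro j hj hjk
    rw [ha k j ?_, zero_mul]
    simp only [Finset.mem_filter, Finset.mem_univ, true_and, not_lt] at hj
    have hjn := j.isLt
    have hkn := k.isLt
    have : k.1 < j.1 := lt_of_le_of_ne (by exact_mod_cast hj) (by
      intro h; exact hjk (Fin.ext h.symm))
    omega
  unfold backSub
  rw [Finset.sum_congr rfl fun j hj => by
    rw [hy j (by simpa using hj)]]
  have hpk : pivot hn A b k = (elim hn A b s).1 k k := rfl
  rw [eq_comm, eq_div_iff hpiv, hpk]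
  have := hsol
  rw [hsplit] at this
  linear_combination this

theorem substAll_eq (hdet : ∀ k : ℕ, k < n → tailDet A k ≠ 0) (x : Fin n → K)
    (hx : ∀ i, (∑ j, A i j * x j) + b i = 0) (s : ℕ) (hs : s ≤ n)
    (g : (Fin n → K) → K) (y : Fin n → K) (hy : ∀ j : Fin n, j.1 < n - s → y j = x j) :
    substAll hn A b s g y = g x := by
  induction s generalizing y with
  | zero =>
    have : y = x := funext fun j => hy j (by have := j.isLt; omega)
    rw [substAll, this]
  | succ s IH =>
    have hkn : n - 1 - s < n := by omega
    set k : Fin n := ⟨n - 1 - s, hkn⟩ with hkdef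
    show substOne hn A b k (substAll hn A b s g) y = g x
    unfold substOne
    have hbs : backSub hn A b k y = x k :=
      backSub_solution hn A b hdet x y hx k (fun j hj => hy j (by
        have : j.1 < k.1 := hj
        simp only [hkdef] at this
        omega))
    refine IH (by omega) _ fun j hj => ?_
    by_cases hjk : j = k
    · rw [hjk, Function.update_self, hbs]
    · rw [Function.update_of_ne hjk]
      refine hy j ?_
      have : j.1 ≠ n - 1 - s := fun h => hjk (Fin.ext h)
      omega

end BSR

/-- Back-substitution as iterated residues (the computational core of the paper's
Lemma in Section 4).  Assume every lower-right square submatrix of `A` on the index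
sets `{k, …, n-1}` has nonzero determinant.  Then:
all the pivots are nonzero; each pivot is the ratio of consecutive lower-right minors,
`p_k = det A_{{k,…,n-1}} / det A_{{k+1,…,n-1}}`, so that their product is `det A`;
the affine system `A x + b = 0` has the unique solution `x* = −A⁻¹ b`;
substituting successively `x_{n-1} = σ_{n-1}, …, x₀ = σ₀` into any function `g` of the
variables yields the constant `g(x*)`; and hence the iterated residue
`g(x*)/(p₀⋯p_{n-1})` equals `g(x*)/det A`. -/

theorem backSubstitution_iterated_residue
    {K : Type*} [Field K] (n : ℕ) (hn : 0 < n)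
    (A : Matrix (Fin n) (Fin n) K) (b : Fin n → K)
    (hdet : ∀ k : ℕ, k < n → tailDet A k ≠ 0) :
    (∀ k : Fin n, pivot hn A b k ≠ 0) ∧
    (∀ k : Fin n, pivot hn A b k = tailDet A k.1 / tailDet A (k.1 + 1)) ∧
    ((∏ k, pivot hn A b k) = A.det) ∧
    (A.mulVec (-(A⁻¹.mulVec b)) = -b) ∧
    (∀ x : Fin n → K, A.mulVec x = -b → x = -(A⁻¹.mulVec b)) ∧
    (∀ g : (Fin n → K) → K, ∀ x : Fin n → K,
        substAll hn A b n g x = g (-(A⁻¹.mulVec b))) ∧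
    (∀ g : (Fin n → K) → K,
        g (-(A⁻¹.mulVec b)) / ∏ k, pivot hn A b k =
          g (-(A⁻¹.mulVec b)) / A.det) := by
  have hA : A.det ≠ 0 := by
    rw [← BSR.tailDet_zero A]
    exact hdet 0 hn
  have hu : IsUnit A.det := isUnit_iff_ne_zero.mpr hA
  have hsolve : A.mulVec (-(A⁻¹.mulVec b)) = -b := by
    rw [Matrix.mulVec_neg, Matrix.mulVec_mulVec, Matrix.mul_nonsing_inv A hu,
      Matrix.one_mulVec]
  have huniq : ∀ x : Fin n → K, A.mulVec x = -b → x = -(A⁻¹.mulVec b) := by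
    intro x hx
    calc x = (A⁻¹ * A).mulVec x := by rw [Matrix.nonsing_inv_mul A hu, Matrix.one_mulVec]
      _ = A⁻¹.mulVec (A.mulVec x) := (Matrix.mulVec_mulVec x A⁻¹ A).symm
      _ = A⁻¹.mulVec (-b) := by rw [hx]
      _ = -(A⁻¹.mulVec b) := by rw [Matrix.mulVec_neg]
  have hxstar : ∀ i, (∑ j, A i j * (-(A⁻¹.mulVec b)) j) + b i = 0 := by
    intro i
    have : A.mulVec (-(A⁻¹.mulVec b)) i = (-b) i := by rw [hsolve]
    rw [Matrix.mulVec, dotProduct] at this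
    rw [this]
    simp
  refine ⟨BSR.pivot_ne_zero hn A b hdet, BSR.pivot_eq_ratio hn A b hdet,
    BSR.prod_pivot_eq_det hn A b hdet, hsolve, huniq, ?_, ?_⟩
  · intro g x
    exact BSR.substAll_eq hn A b hdet _ hxstar n le_rfl g x
      (fun j hj => absurd hj (by omega))
  · intro g
    rw [BSR.prod_pivot_eq_det hn A b hdet]
end

section
/- Let t₁, t₂ ∈ ℂ with 0 < |t₁| < 1, 0 < |t₂| < 1 and t₁ ≠ t₂. Then (1/(2πi)) ∮_{|s|=1} (1 − t₁t₂) / ( s (1 − s t₁)(1 − s t₂)(1 − t₂ s^{-1})(1 − t₁ s^{-1}) ) ds = (1 − t₁t₂)/((1 − t₁t₂)(1 − t₂²)(1 − t₁ t₂^{-1})) + (1 − t₁t₂)/((1 − t₁²)(1 − t₁t₂)(1 − t₂ t₁^{-1})). -/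
open Complex Metric

/-- If `|z| < 1` then `1 - z ≠ 0`. -/
lemma one_sub_ne_zero_of_abs_lt_one {z : ℂ} (h : ‖z‖ < 1) : 1 - z ≠ 0 := by
  intro hz
  have : z = 1 := by linear_combination -hz
  simp [this] at h

/-- The circle integral of `(z - w)⁻¹` around the unit circle vanishes when `|w| > 1`. -/
lemma circleIntegral_sub_inv_eq_zero_of_one_lt_abs {w : ℂ} (hw : 1 < ‖w‖) :
    (∮ z in C((0 : ℂ), 1), (z - w)⁻¹) = 0 := by
  have hne : ∀ z ∈ closedBall (0 : ℂ) 1, z - w ≠ 0 := by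
    intro z hz
    rw [mem_closedBall_zero_iff] at hz
    intro h
    have : z = w := by linear_combination h
    rw [this] at hz
    exact absurd hz (not_le.mpr hw)
  refine circleIntegral_eq_zero_of_differentiable_on_off_countable zero_le_one
    Set.countable_empty ?_ ?_
  · exact ContinuousOn.inv₀ (by fun_prop) hne
  · intro z hz
    exact ((differentiableAt_id.sub_const w).inv
      (hne z (ball_subset_closedBall hz.1)))

set_option maxHeartbeats 2000000

/-- The Nekrasov–Shadchin contour integral computing the character of `H⁰` of the
structure sheaf of the hyper-Kähler quotient `ℂ⁴ /// ℂ*`: for `0 < |t₁| < 1`,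
`0 < |t₂| < 1`, `t₁ ≠ t₂`, the average over the unit circle of the character equals the
sum of the residues at the two simple poles `s = t₁`, `s = t₂` inside the unit disc. -/
theorem nekrasov_shadchin_character_contour_integral
    (t₁ t₂ : ℂ) (h₁ : 0 < ‖t₁‖) (h₁' : ‖t₁‖ < 1)
    (h₂ : 0 < ‖t₂‖) (h₂' : ‖t₂‖ < 1) (hne : t₁ ≠ t₂) :
    (1 / (2 * (Real.pi : ℂ) * Complex.I)) *
        (∮ s in C((0 : ℂ), 1),
          (1 - t₁ * t₂) /
            (s * (1 - s * t₁) * (1 - s * t₂) * (1 - t₂ * s⁻¹) * (1 - t₁ * s⁻¹))) =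
      (1 - t₁ * t₂) / ((1 - t₁ * t₂) * (1 - t₂ ^ 2) * (1 - t₁ * t₂⁻¹)) +
        (1 - t₁ * t₂) / ((1 - t₁ ^ 2) * (1 - t₁ * t₂) * (1 - t₂ * t₁⁻¹)) := by
  have ht₁0 : t₁ ≠ 0 := by simpa using h₁.ne'
  have ht₂0 : t₂ ≠ 0 := by simpa using h₂.ne'
  have h11 : (1 : ℂ) - t₁ ^ 2 ≠ 0 := by
    apply one_sub_ne_zero_of_abs_lt_one
    rw [norm_pow]
    exact pow_lt_one₀ (norm_nonneg t₁) h₁' two_ne_zero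
  have h22 : (1 : ℂ) - t₂ ^ 2 ≠ 0 := by
    apply one_sub_ne_zero_of_abs_lt_one
    rw [norm_pow]
    exact pow_lt_one₀ (norm_nonneg t₂) h₂' two_ne_zero
  have h12 : (1 : ℂ) - t₁ * t₂ ≠ 0 := by
    apply one_sub_ne_zero_of_abs_lt_one
    rw [norm_mul]
    exact mul_lt_one_of_nonneg_of_lt_one_left (norm_nonneg t₁) h₁' h₂'.le
  have hd : t₁ - t₂ ≠ 0 := sub_ne_zero.mpr hne
  have hd' : t₂ - t₁ ≠ 0 := sub_ne_zero.mpr (Ne.symm hne)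
  have hinv₁ : 1 < ‖t₁⁻¹‖ := by
    rw [norm_inv]; exact (one_lt_inv₀ h₁).mpr h₁'
  have hinv₂ : 1 < ‖t₂⁻¹‖ := by
    rw [norm_inv]; exact (one_lt_inv₀ h₂).mpr h₂'
  set A : ℂ := t₁ / ((1 - t₁ ^ 2) * (t₁ - t₂)) with hA
  set B : ℂ := t₂ / ((1 - t₂ ^ 2) * (t₂ - t₁)) with hB
  -- Step 1: rewrite the integrand as a sum of simple fractions on the unit circle.
  have key : (∮ s in C((0 : ℂ), 1),
      (1 - t₁ * t₂) /
        (s * (1 - s * t₁) * (1 - s * t₂) * (1 - t₂ * s⁻¹) * (1 - t₁ * s⁻¹)))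
      = ∮ s in C((0 : ℂ), 1),
        A • ((s - t₁)⁻¹ - (s - t₁⁻¹)⁻¹) - B • ((s - t₂⁻¹)⁻¹ - (s - t₂)⁻¹) := by
    refine circleIntegral.integral_congr zero_le_one fun s hs => ?_
    rw [mem_sphere_zero_iff_norm] at hs
    have habs : ‖s‖ = 1 := hs
    have hs0 : s ≠ 0 := by
      intro h; rw [h] at habs; simp at habs
    have hst₁ : s - t₁ ≠ 0 := by
      intro h
      have : s = t₁ := by linear_combination h
      rw [this] at habs; exact absurd habs (ne_of_lt h₁')
    have hst₂ : s - t₂ ≠ 0 := by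
      intro h
      have : s = t₂ := by linear_combination h
      rw [this] at habs; exact absurd habs (ne_of_lt h₂')
    have hsi₁ : s - t₁⁻¹ ≠ 0 := by
      intro h
      have : s = t₁⁻¹ := by linear_combination h
      rw [this] at habs; exact absurd habs.symm (ne_of_lt hinv₁)
    have hsi₂ : s - t₂⁻¹ ≠ 0 := by
      intro h
      have : s = t₂⁻¹ := by linear_combination h
      rw [this] at habs; exact absurd habs.symm (ne_of_lt hinv₂)
    have h1s : (1 : ℂ) - s * t₁ ≠ 0 := by
      apply one_sub_ne_zero_of_abs_lt_one
      rw [norm_mul, habs, one_mul]; exact h₁'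
    have h2s : (1 : ℂ) - s * t₂ ≠ 0 := by
      apply one_sub_ne_zero_of_abs_lt_one
      rw [norm_mul, habs, one_mul]; exact h₂'
    have e1 : (1 : ℂ) - t₂ * s⁻¹ = (s - t₂) * s⁻¹ := by field_simp
    have e2 : (1 : ℂ) - t₁ * s⁻¹ = (s - t₁) * s⁻¹ := by field_simp
    have e3 : (s - t₁⁻¹)⁻¹ = -t₁ / (1 - s * t₁) := by
      rw [eq_div_iff h1s, inv_mul_eq_div, div_eq_iff hsi₁]
      field_simp
      ring
    have e4 : (s - t₂⁻¹)⁻¹ = -t₂ / (1 - s * t₂) := by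
      rw [eq_div_iff h2s, inv_mul_eq_div, div_eq_iff hsi₂]
      field_simp
      ring
    have eL : s * (1 - s * t₁) * (1 - s * t₂) * ((s - t₂) * s⁻¹) * ((s - t₁) * s⁻¹)
        = ((1 - s * t₁) * (1 - s * t₂) * (s - t₂) * (s - t₁)) / s := by
      field_simp
    rw [e1, e2, e3, e4, eL, div_div_eq_mul_div]
    simp only [smul_eq_mul, hA, hB]
    rw [inv_eq_one_div (s - t₁), inv_eq_one_div (s - t₂),
      div_sub_div _ _ hst₁ h1s, div_sub_div _ _ h2s hst₂,
      div_mul_div_comm, div_mul_div_comm,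
      div_sub_div _ _
        (mul_ne_zero (mul_ne_zero h11 hd) (mul_ne_zero hst₁ h1s))
        (mul_ne_zero (mul_ne_zero h22 hd') (mul_ne_zero h2s hst₂)),
      div_eq_div_iff
        (mul_ne_zero (mul_ne_zero (mul_ne_zero h1s h2s) hst₂) hst₁)
        (mul_ne_zero
          (mul_ne_zero (mul_ne_zero h11 hd) (mul_ne_zero hst₁ h1s))
          (mul_ne_zero (mul_ne_zero h22 hd') (mul_ne_zero h2s hst₂)))]
    ring
  -- Step 2: integrability of the pieces.
  have hco : ∀ w : ℂ, ‖w‖ ≠ 1 →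
      ContinuousOn (fun z : ℂ => (z - w)⁻¹) (sphere (0 : ℂ) 1) := by
    intro w hw
    refine (continuousOn_id.sub continuousOn_const).inv₀ ?_
    intro z hz h
    rw [mem_sphere_zero_iff_norm] at hz
    have hzw : z = w := sub_eq_zero.mp h
    rw [hzw] at hz
    exact hw hz
  have hint : ∀ w : ℂ, ‖w‖ ≠ 1 →
      CircleIntegrable (fun z => (z - w)⁻¹) 0 1 := by
    intro w hw
    exact ContinuousOn.circleIntegrable zero_le_one (hco w hw)
  have hX : CircleIntegrable (fun z => A • ((z - t₁)⁻¹ - (z - t₁⁻¹)⁻¹)) 0 1 :=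
    ContinuousOn.circleIntegrable zero_le_one
      ((continuousOn_const (c := A)).smul ((hco t₁ (ne_of_lt h₁')).sub (hco t₁⁻¹ (ne_of_gt hinv₁))))
  have hY : CircleIntegrable (fun z => B • ((z - t₂⁻¹)⁻¹ - (z - t₂)⁻¹)) 0 1 :=
    ContinuousOn.circleIntegrable zero_le_one
      ((continuousOn_const (c := B)).smul ((hco t₂⁻¹ (ne_of_gt hinv₂)).sub (hco t₂ (ne_of_lt h₂'))))
  -- Step 3: compute the integral using linearity.
  rw [key, circleIntegral.integral_sub hX hY,
    circleIntegral.integral_smul, circleIntegral.integral_smul,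
    circleIntegral.integral_sub (hint t₁ (ne_of_lt h₁')) (hint t₁⁻¹ (ne_of_gt hinv₁)),
    circleIntegral.integral_sub (hint t₂⁻¹ (ne_of_gt hinv₂)) (hint t₂ (ne_of_lt h₂')),
    circleIntegral_sub_inv_eq_zero_of_one_lt_abs hinv₁,
    circleIntegral_sub_inv_eq_zero_of_one_lt_abs hinv₂,
    circleIntegral.integral_sub_inv_of_mem_ball
      (show t₁ ∈ ball (0 : ℂ) 1 by simpa [mem_ball_zero_iff] using h₁'),
    circleIntegral.integral_sub_inv_of_mem_ball
      (show t₂ ∈ ball (0 : ℂ) 1 by simpa [mem_ball_zero_iff] using h₂')]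
  simp only [smul_eq_mul, sub_zero, zero_sub, mul_neg, sub_neg_eq_add]
  -- Step 4: final algebraic identity.
  have hpi : (2 * (Real.pi : ℂ) * Complex.I) ≠ 0 := by
    simp [Real.pi_ne_zero, Complex.I_ne_zero]
  have h12' : (1 : ℂ) - t₁ * t₂⁻¹ ≠ 0 := by
    intro h
    apply hd
    field_simp at h
    linear_combination -h
  have h21' : (1 : ℂ) - t₂ * t₁⁻¹ ≠ 0 := by
    intro h
    apply hd
    field_simp at h
    linear_combination h
  rw [hA, hB]
  field_simp
  ring
end
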